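/- Let S be a commutative semiring and f : Σ* → S a word function. If there exists a finitely generated stable subsemimodule M ⊆ S^{Σ*} containing f, then f is recognizable by some weighted automaton over S. (Jacob's theorem, one direction.) -/
import Mathlib


open Matrix

def wordProd {S : Type*} [CommSemiring S] {A : Type*} {r : ℕ}
    (μ : A → Matrix (Fin r) (Fin r) S) (w : List A) : Matrix (Fin r) (Fin r) S :=
  (w.map μ).prod

/-- Jacob's theorem, one direction: if `f` lies in a finitely generated stable
subsemimodule of `S^{Σ*}`, then `f` is recognizable by a weighted automaton. -/
theorem recognizable_of_mem_fg_stable_submodule {S A : Type*} [CommSemiring S] [Fintype A]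
    (f : List A → S)
    (h : ∃ M : Submodule S (List A → S), M.FG ∧ f ∈ M ∧
      ∀ (w : List A) (g : List A → S), g ∈ M → (fun u => g (w ++ u)) ∈ M) :
    ∃ (r : ℕ) (α γ : Fin r → S) (μ : A → Matrix (Fin r) (Fin r) S),
      ∀ w : List A, f w = α ⬝ᵥ (wordProd μ w *ᵥ γ) := by
  obtain ⟨M, ⟨s, hs⟩, hf, hstab⟩ := h
  set r := s.card with hr
  let g : Fin r → (List A → S) := fun i => (s.equivFin.symm i : List A → S)
  have hrange : Set.range g = ↑s := by
    ext x
    constructor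
    · rintro ⟨i, rfl⟩; exact (s.equivFin.symm i).2
    · intro hx; exact ⟨s.equivFin ⟨x, hx⟩, by simp [g]⟩
  have hspan : Submodule.span S (Set.range g) = M := by rw [hrange, hs]
  have hrep : ∀ h₀ ∈ M, ∃ c : Fin r → S, (∑ i, c i • g i) = h₀ := by
    intro h₀ hh
    rw [← hspan] at hh
    exact (Submodule.mem_span_range_iff_exists_fun S).mp hh
  have hgmem : ∀ i, g i ∈ M := fun i => by
    rw [← hspan]; exact Submodule.subset_span ⟨i, rfl⟩
  choose μc hμc using fun (a : A) (i : Fin r) =>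
    hrep (fun u => g i ([a] ++ u)) (hstab [a] (g i) (hgmem i))
  let μ : A → Matrix (Fin r) (Fin r) S := fun a => Matrix.of (fun i j => μc a i j)
  let γ : Fin r → S := fun i => g i []
  obtain ⟨α, hα⟩ := hrep f hf
  have key : ∀ (w : List A) (i : Fin r), g i w = (wordProd μ w *ᵥ γ) i := by
    intro w
    induction w with
    | nil =>
      intro i
      simp [wordProd, γ]
    | cons a w ih =>
      intro i
      have h1 := congrFun (hμc a i) w
      simp only [Finset.sum_apply, Pi.smul_apply, smul_eq_mul, List.singleton_append] at h1
      have h2 : wordProd μ (a :: w) = μ a * wordProd μ w := by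
        simp [wordProd]
      rw [← h1, h2, ← Matrix.mulVec_mulVec]
      simp only [Matrix.mulVec, dotProduct]
      exact Finset.sum_congr rfl fun j _ => by rw [ih j]; rfl
  refine ⟨r, α, γ, μ, fun w => ?_⟩
  rw [← hα]
  simp only [Finset.sum_apply, Pi.smul_apply, smul_eq_mul, dotProduct]
  exact Finset.sum_congr rfl fun i _ => by rw [key w i]
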